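/- arXiv:math/0411275 — 2 statements merged into one kernel-verified Lean document; each statement's English description precedes it below -/
import Mathlib

section
/- There exists a solution of the N-peg puzzle using exactly N² + 2N moves; hence the minimum number of moves needed is exactly N² + 2N. -/
/-- A cell of the puzzle: a blue peg, a red peg, or an empty hole. -/
inductive Cell
  | B : Cell
  | R : Cell
  | O : Cell
  deriving DecidableEq

open Cell

/-- A step: a peg (of either color) moves into the adjacent empty hole. -/
def StepMove (c d : List Cell) : Prop :=
  ∃ x y p, p ≠ O ∧
    ((c = x ++ p :: O :: y ∧ d = x ++ O :: p :: y) ∨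
     (c = x ++ O :: p :: y ∧ d = x ++ p :: O :: y))

/-- A jump: a peg jumps over a single adjacent peg into the empty hole. -/
def JumpMove (c d : List Cell) : Prop :=
  ∃ x y p q, p ≠ O ∧ q ≠ O ∧
    ((c = x ++ p :: q :: O :: y ∧ d = x ++ O :: q :: p :: y) ∨
     (c = x ++ O :: q :: p :: y ∧ d = x ++ p :: q :: O :: y))

/-- A legal move of the puzzle: a step or a jump. -/
def PegMove (c d : List Cell) : Prop := StepMove c d ∨ JumpMove c d

/-- Initial configuration `BᴺORᴺ`. -/
def startCfg (N : ℕ) : List Cell := List.replicate N B ++ O :: List.replicate N R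

/-- Final configuration `RᴺOBᴺ`. -/
def finishCfg (N : ℕ) : List Cell := List.replicate N R ++ O :: List.replicate N B

/-- `IsSolution N L f` : `f 0, f 1, …, f L` is a sequence of configurations
beginning at `BᴺORᴺ`, ending at `RᴺOBᴺ`, each obtained from the previous one
by a legal move; it uses `L` moves. -/
def IsSolution (N L : ℕ) (f : ℕ → List Cell) : Prop :=
  f 0 = startCfg N ∧ f L = finishCfg N ∧ ∀ t < L, PegMove (f t) (f (t + 1))

---- existence construction ----

lemma step_right (x y : List Cell) (p : Cell) (hp : p ≠ O) :
    PegMove (x ++ p :: O :: y) (x ++ O :: p :: y) :=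
  Or.inl ⟨x, y, p, hp, Or.inl ⟨rfl, rfl⟩⟩

lemma step_left (x y : List Cell) (p : Cell) (hp : p ≠ O) :
    PegMove (x ++ O :: p :: y) (x ++ p :: O :: y) :=
  Or.inl ⟨x, y, p, hp, Or.inr ⟨rfl, rfl⟩⟩

lemma jump_left (x y : List Cell) (p q : Cell) (hp : p ≠ O) (hq : q ≠ O) :
    PegMove (x ++ p :: q :: O :: y) (x ++ O :: q :: p :: y) :=
  Or.inr ⟨x, y, p, q, hp, hq, Or.inl ⟨rfl, rfl⟩⟩

lemma jump_right (x y : List Cell) (p q : Cell) (hp : p ≠ O) (hq : q ≠ O) :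
    PegMove (x ++ O :: q :: p :: y) (x ++ p :: q :: O :: y) :=
  Or.inr ⟨x, y, p, q, hp, hq, Or.inr ⟨rfl, rfl⟩⟩

inductive Moves : ℕ → List Cell → List Cell → Prop
  | zero (c) : Moves 0 c c
  | succ {c d e : List Cell} {n : ℕ} : PegMove c d → Moves n d e → Moves (n+1) c e

lemma Moves.cast {m n : ℕ} {c d : List Cell} (h : Moves m c d) (e : m = n) : Moves n c d := e ▸ h

lemma Moves.trans {m n : ℕ} {c d e : List Cell} (h : Moves m c d) (h' : Moves n d e) :
    Moves (m + n) c e := by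
  induction h with
  | zero c => simpa using h'
  | succ hm _ ih => exact (Moves.succ hm (ih h')).cast (by omega)

lemma Moves.one {c d : List Cell} (h : PegMove c d) : Moves 1 c d :=
  Moves.succ h (Moves.zero d)

def br : ℕ → List Cell
  | 0 => []
  | (k+1) => B :: R :: br k

def rb : ℕ → List Cell
  | 0 => []
  | (k+1) => R :: B :: rb k

lemma rb_snoc (k : ℕ) : rb (k+1) = rb k ++ [R, B] := by
  induction k with
  | zero => rfl
  | succ k ih =>
    calc rb (k+2) = R :: B :: rb (k+1) := rfl
    _ = R :: B :: (rb k ++ [R, B]) := by rw [ih]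
    _ = (R :: B :: rb k) ++ [R, B] := by simp
    _ = rb (k+1) ++ [R, B] := rfl

lemma br_snoc (k : ℕ) : br (k+1) = br k ++ [B, R] := by
  induction k with
  | zero => rfl
  | succ k ih =>
    calc br (k+2) = B :: R :: br (k+1) := rfl
    _ = B :: R :: (br k ++ [B, R]) := by rw [ih]
    _ = (B :: R :: br k) ++ [B, R] := by simp
    _ = br (k+1) ++ [B, R] := rfl

lemma rb_R (k : ℕ) : rb k ++ [R] = R :: br k := by
  induction k with
  | zero => rfl
  | succ k ih => rw [rb, br]; simp [ih]

lemma br_B (k : ℕ) : br k ++ [B] = B :: rb k := by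
  induction k with
  | zero => rfl
  | succ k ih => rw [rb, br]; simp [ih]

lemma sweepL : ∀ (k : ℕ) (x y : List Cell),
    Moves k (x ++ br k ++ O :: y) (x ++ O :: (rb k ++ y))
  | 0, x, y => by simpa [br, rb] using Moves.zero _
  | (k+1), x, y => by
    have h1 : PegMove (x ++ br (k+1) ++ O :: y) ((x ++ br k) ++ O :: R :: B :: y) := by
      have := jump_left (x ++ br k) y B R (by simp) (by simp)
      simpa [br_snoc] using this
    have h2 := sweepL k x (R :: B :: y)
    have h3 : Moves (1 + k) (x ++ br (k+1) ++ O :: y) (x ++ O :: (rb k ++ (R :: B :: y))) := by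
      refine (Moves.one h1).trans ?_
      simpa using h2
    have : rb k ++ (R :: B :: y) = rb (k+1) ++ y := by simp [rb_snoc]
    rw [this] at h3
    exact h3.cast (by omega)

lemma sweepR : ∀ (k : ℕ) (x y : List Cell),
    Moves k (x ++ O :: (br k ++ y)) (x ++ rb k ++ O :: y)
  | 0, x, y => by simpa [br, rb] using Moves.zero _
  | (k+1), x, y => by
    have h1 : PegMove (x ++ O :: (br (k+1) ++ y)) ((x ++ [R, B]) ++ O :: (br k ++ y)) := by
      have := jump_right x (br k ++ y) R B (by simp) (by simp)
      simpa [br] using this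
    have h2 := sweepR k (x ++ [R, B]) y
    have h3 : Moves (1 + k) (x ++ O :: (br (k+1) ++ y)) ((x ++ [R, B]) ++ rb k ++ O :: y) :=
      (Moves.one h1).trans h2
    have e : x ++ [R, B] ++ rb k ++ O :: y = x ++ rb (k+1) ++ O :: y := by simp [rb]
    rw [e] at h3
    exact h3.cast (by omega)

def rep (n : ℕ) (a : Cell) : List Cell := List.replicate n a

def Ac (k m : ℕ) : List Cell := rep m B ++ O :: (rb k ++ rep m R)
def Cc (k m : ℕ) : List Cell := rep m B ++ rb k ++ O :: rep m R
def Dc (k m : ℕ) : List Cell := rep m R ++ O :: (rb k ++ rep m B)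
def Ec (k m : ℕ) : List Cell := rep m R ++ rb k ++ O :: rep m B

def tri : ℕ → ℕ
  | 0 => 0
  | (k+1) => (k+1) + tri k

lemma rep_succ (n : ℕ) (a : Cell) : rep (n+1) a = a :: rep n a := rfl
lemma rep_snoc (n : ℕ) (a : Cell) : rep (n+1) a = rep n a ++ [a] := by
  simp [rep, List.replicate_succ']

lemma descend : ∀ (k m : ℕ),
    Moves (tri k) (Dc k m) (rep (k+m) R ++ O :: rep (k+m) B) ∧
    Moves (tri k) (Ec k m) (rep (k+m) R ++ O :: rep (k+m) B)
  | 0, m => by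
    constructor
    · simpa [Dc, tri, rb] using Moves.zero _
    · simpa [Ec, tri, rb] using Moves.zero _
  | (k+1), m => by
    constructor
    · -- D part
      have h1 : PegMove (Dc (k+1) m) (rep m R ++ R :: O :: (B :: (rb k ++ rep m B))) := by
        have := step_left (rep m R) (B :: (rb k ++ rep m B)) R (by simp)
        simpa [Dc, rb] using this
      have e1 : rep m R ++ R :: O :: (B :: (rb k ++ rep m B)) =
          rep (m+1) R ++ O :: (br k ++ rep (m+1) B) := by
        rw [rep_snoc m R, rep_succ m B]
        have : br k ++ (B :: rep m B) = B :: (rb k ++ rep m B) := by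
          rw [show br k ++ (B :: rep m B) = (br k ++ [B]) ++ rep m B by simp, br_B]; simp
        simp [this]
      have h2 := sweepR k (rep (m+1) R) (rep (m+1) B)
      have h3 := (descend k (m+1)).2
      have h4 : Moves (1 + (k + tri k)) (Dc (k+1) m)
          (rep (k+(m+1)) R ++ O :: rep (k+(m+1)) B) := by
        refine (Moves.one h1).trans ?_
        rw [e1]
        exact h2.trans (by simpa [Ec] using h3)
      have e5 : k + (m+1) = (k+1) + m := by omega
      rw [e5] at h4
      exact h4.cast (by simp only [tri]; omega)
    · -- E part
      have h1 : PegMove (Ec (k+1) m) ((rep m R ++ rb k ++ [R]) ++ O :: (B :: rep m B)) := by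
        have := step_right (rep m R ++ rb k ++ [R]) (rep m B) B (by simp)
        have e : rep m R ++ rb (k+1) ++ O :: rep m B =
            (rep m R ++ rb k ++ [R]) ++ B :: O :: rep m B := by
          rw [rb_snoc]; simp
        rw [Ec, e]
        simpa using this
      have e1 : (rep m R ++ rb k ++ [R]) ++ O :: (B :: rep m B) =
          rep (m+1) R ++ br k ++ O :: rep (m+1) B := by
        rw [rep_snoc m R, rep_succ m B]
        rw [List.append_assoc (rep m R) (rb k) [R], rb_R]
        simp
      have h2 := sweepL k (rep (m+1) R) (rep (m+1) B)
      have h3 := (descend k (m+1)).1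
      have h4 : Moves (1 + (k + tri k)) (Ec (k+1) m)
          (rep (k+(m+1)) R ++ O :: rep (k+(m+1)) B) := by
        refine (Moves.one h1).trans ?_
        rw [e1]
        refine (by simpa using h2 : Moves k _ _).trans ?_
        simpa [Dc] using h3
      have e5 : k + (m+1) = (k+1) + m := by omega
      rw [e5] at h4
      exact h4.cast (by simp only [tri]; omega)
  termination_by k m => k

def phi : ℕ → ℕ → ℕ
  | k, 0 => tri k
  | k, (m+1) => (k+2) + phi (k+1) m

lemma ascend : ∀ (m k : ℕ),
    Moves (phi k m) (Ac k m) (rep (k+m) R ++ O :: rep (k+m) B) ∧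
    Moves (phi k m) (Cc k m) (rep (k+m) R ++ O :: rep (k+m) B)
  | 0, k => by
    constructor
    · have h := (descend k 0).1
      have e : Dc k 0 = Ac k 0 := by simp [Dc, Ac, rep]
      rw [e] at h
      exact h.cast (by simp [phi])
    · have h := (descend k 0).2
      have e : Ec k 0 = Cc k 0 := by simp [Ec, Cc, rep]
      rw [e] at h
      exact h.cast (by simp [phi])
  | (m+1), k => by
    constructor
    · -- A part
      have h1 : PegMove (Ac k (m+1)) (rep m B ++ O :: (br (k+1) ++ rep m R)) := by
        have := step_right (rep m B) (rb k ++ rep (m+1) R) B (by simp)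
        have e : Ac k (m+1) = rep m B ++ B :: O :: (rb k ++ rep (m+1) R) := by
          rw [Ac, rep_snoc m B]; simp
        have e2 : rep m B ++ O :: B :: (rb k ++ rep (m+1) R) =
            rep m B ++ O :: (br (k+1) ++ rep m R) := by
          have : B :: (rb k ++ rep (m+1) R) = br (k+1) ++ rep m R := by
            rw [rep_succ m R, br, show rb k ++ (R :: rep m R) = (rb k ++ [R]) ++ rep m R by simp,
              rb_R]
            simp
          rw [this]
        rw [e, ← e2]
        exact this
      have h2 := sweepR (k+1) (rep m B) (rep m R)
      have h3 := (ascend m (k+1)).2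
      have h4 : Moves (1 + ((k+1) + phi (k+1) m)) (Ac k (m+1))
          (rep ((k+1)+m) R ++ O :: rep ((k+1)+m) B) := by
        refine (Moves.one h1).trans ?_
        refine h2.trans ?_
        simpa [Cc] using h3
      have e5 : (k+1) + m = k + (m+1) := by omega
      rw [e5] at h4
      exact h4.cast (by simp only [phi]; omega)
    · -- C part
      have h1 : PegMove (Cc k (m+1)) (rep m B ++ br (k+1) ++ O :: rep m R) := by
        have := step_left (rep (m+1) B ++ rb k) (rep m R) R (by simp)
        have e : Cc k (m+1) = (rep (m+1) B ++ rb k) ++ O :: R :: rep m R := by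
          rw [Cc, rep_succ m R]; try simp
        have e2 : (rep (m+1) B ++ rb k) ++ R :: O :: rep m R =
            rep m B ++ br (k+1) ++ O :: rep m R := by
          rw [rep_snoc m B, br]
          have : rb k ++ (R :: O :: rep m R) = (rb k ++ [R]) ++ O :: rep m R := by simp
          simp [this, rb_R]
        rw [e, ← e2]
        exact this
      have h2 := sweepL (k+1) (rep m B) (rep m R)
      have h3 := (ascend m (k+1)).1
      have h4 : Moves (1 + ((k+1) + phi (k+1) m)) (Cc k (m+1))
          (rep ((k+1)+m) R ++ O :: rep ((k+1)+m) B) := by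
        refine (Moves.one h1).trans ?_
        refine h2.trans ?_
        simpa [Ac] using h3
      have e5 : (k+1) + m = k + (m+1) := by omega
      rw [e5] at h4
      exact h4.cast (by simp only [phi]; omega)
  termination_by m k => m

lemma tri_two (k : ℕ) : 2 * tri k = k * k + k := by
  induction k with
  | zero => rfl
  | succ k ih => rw [tri]; ring_nf; ring_nf at ih; omega

lemma phi_two : ∀ (m k : ℕ), 2 * phi k m = 4*k*m + 2*m*m + 4*m + k*k + k
  | 0, k => by rw [phi, tri_two]; ring
  | (m+1), k => by
    rw [phi, Nat.mul_add, phi_two m (k+1)]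
    ring

lemma phi_zero (N : ℕ) : phi 0 N = N^2 + 2*N := by
  have := phi_two N 0
  ring_nf at this ⊢
  omega

lemma moves_start_finish (N : ℕ) : Moves (N^2 + 2*N) (startCfg N) (finishCfg N) := by
  have h := (ascend N 0).1
  have e1 : Ac 0 N = startCfg N := by simp [Ac, rb, startCfg, rep]
  have e2 : rep (0+N) R ++ O :: rep (0+N) B = finishCfg N := by simp [finishCfg, rep]
  rw [e1, e2] at h
  exact h.cast (phi_zero N)

lemma moves_sol {n : ℕ} {c d : List Cell} (h : Moves n c d) :
    ∃ f : ℕ → List Cell, f 0 = c ∧ f n = d ∧ ∀ t < n, PegMove (f t) (f (t+1)) := by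
  induction h with
  | zero c => exact ⟨fun _ => c, rfl, rfl, fun t ht => absurd ht (by omega)⟩
  | @succ c d e n hm _ ih =>
    obtain ⟨g, hg0, hgn, hgm⟩ := ih
    refine ⟨fun t => Nat.rec c (fun t' _ => g t') t, rfl, hgn, ?_⟩
    intro t ht
    cases t with
    | zero => simpa [hg0] using hm
    | succ t => exact hgm t (by omega)

theorem exists_solution (N : ℕ) : ∃ f : ℕ → List Cell, IsSolution N (N ^ 2 + 2 * N) f := by
  obtain ⟨f, h0, h1, h2⟩ := moves_sol (moves_start_finish N)
  exact ⟨f, h0, h1, h2⟩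


---- lower bound ----


/-- count of a cell value in a list -/
def cnt (a : Cell) : List Cell → ℕ
  | [] => 0
  | (b :: l) => (if b = a then 1 else 0) + cnt a l

lemma cnt_append (a : Cell) (l l' : List Cell) : cnt a (l ++ l') = cnt a l + cnt a l' := by
  induction l with
  | nil => simp [cnt]
  | cons b l ih => simp [cnt, ih]; omega

/-- number of (B,R) inversion pairs (B strictly before R) -/
def inv : List Cell → ℕ
  | [] => 0
  | (a :: l) => (if a = B then cnt R l else 0) + inv l

/-- the list with O's removed -/
def remO : List Cell → List Cell
  | [] => []
  | (a :: l) => if a = O then remO l else a :: remO l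

lemma remO_of_cnt {l : List Cell} (h : cnt O l = 0) : remO l = l := by
  induction l with
  | nil => rfl
  | cons a l ih =>
    simp [cnt] at h
    rcases h with ⟨h1, h2⟩
    simp [remO, h1, ih h2]

lemma remO_append (u l : List Cell) (h : cnt O u = 0) : remO (u ++ l) = u ++ remO l := by
  induction u with
  | nil => rfl
  | cons a u ih =>
    simp [cnt] at h
    rcases h with ⟨h1, h2⟩
    simp [remO, h1, ih h2]

/-- position of the first O -/
def kpos : List Cell → ℕ
  | [] => 0
  | (a :: l) => if a = O then 0 else kpos l + 1

lemma kpos_append (u l : List Cell) (h : cnt O u = 0) : kpos (u ++ l) = u.length + kpos l := by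
  induction u with
  | nil => simp [kpos]
  | cons a u ih =>
    simp [cnt] at h
    rcases h with ⟨h1, h2⟩
    simp [kpos, h1, ih h2]
    omega

def nth : List Cell → ℕ → Option Cell
  | [], _ => none
  | (a :: _), 0 => some a
  | (_ :: l), (n+1) => nth l n

lemma nth_append_right (u l : List Cell) (n : ℕ) : nth (u ++ l) (u.length + n) = nth l n := by
  induction u with
  | nil => simp [nth]
  | cons a u ih => simpa [nth, Nat.succ_add, List.length_cons, Nat.add_right_comm] using ih

lemma nth_append_left (u l : List Cell) (n : ℕ) (h : n < u.length) :
    nth (u ++ l) n = nth u n := by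
  induction u generalizing n with
  | nil => simp at h
  | cons a u ih =>
    cases n with
    | zero => rfl
    | succ n => exact ih n (by simpa using h)

/-- the pair value at the middle -/
def pairval : Option Cell → Option Cell → ℤ
  | some B, some R => -1
  | some R, some B => 1
  | _, _ => 0

def eps (N : ℕ) (w : List Cell) (k : ℕ) : ℤ :=
  if (k + N) % 2 = 1 then pairval (nth w (N - 1)) (nth w N) else 0

def phiW (N : ℕ) (w : List Cell) (k : ℕ) : ℤ :=
  (inv w : ℤ) + 2 * (cnt B (w.take N) : ℤ) + eps N w k

lemma pairval_bound (a b : Option Cell) : |pairval a b| ≤ 1 := by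
  rcases a with _ | (_ | _ | _) <;> rcases b with _ | (_ | _ | _) <;> simp [pairval]

lemma eps_bound (N : ℕ) (w : List Cell) (k : ℕ) : |eps N w k| ≤ 1 := by
  rw [eps]
  split
  · exact pairval_bound _ _
  · simp

lemma eps_even (N : ℕ) (w : List Cell) (k : ℕ) (h : (k + N) % 2 = 0) : eps N w k = 0 := by
  rw [eps]
  split
  · omega
  · rfl

lemma step_phi (N : ℕ) (w : List Cell) (k : ℕ) :
    |phiW N w (k+1) - phiW N w k| ≤ 1 := by
  have h : phiW N w (k+1) - phiW N w k = eps N w (k+1) - eps N w k := by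
    simp [phiW]
  rw [h]
  rcases Nat.mod_two_eq_zero_or_one (k + N) with he | ho
  · have h1 : eps N w k = 0 := eps_even _ _ _ he
    rw [h1, sub_zero]
    exact eps_bound _ _ _
  · have h1 : eps N w (k+1) = 0 := eps_even _ _ _ (by omega)
    rw [h1, zero_sub, abs_neg]
    exact eps_bound _ _ _

def sv : Cell → Cell → ℤ
  | B, R => 1
  | R, B => -1
  | _, _ => 0

lemma sv_bound (p q : Cell) : |sv p q| ≤ 1 := by
  cases p <;> cases q <;> simp [sv]

lemma cnt_swap (a : Cell) (u v : List Cell) (p q : Cell) :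
    cnt a (u ++ p :: q :: v) = cnt a (u ++ q :: p :: v) := by
  simp [cnt_append, cnt]
  omega

lemma inv_swap (u v : List Cell) (p q : Cell) :
    (inv (u ++ p :: q :: v) : ℤ) = (inv (u ++ q :: p :: v) : ℤ) + sv p q := by
  induction u with
  | nil =>
    simp only [List.nil_append]
    cases p <;> cases q <;> simp [inv, cnt, sv] <;> push_cast <;> ring
  | cons a u ih =>
    simp only [List.cons_append, inv, List.append_eq]
    rw [cnt_swap]
    push_cast
    push_cast at ih
    omega

lemma take_app_add (u l : List Cell) (n : ℕ) :
    (u ++ l).take (u.length + n) = u ++ l.take n := by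
  induction u with
  | nil => simp
  | cons a u ih => simpa [List.take, Nat.succ_add] using ih

lemma take_app_le (u l : List Cell) (n : ℕ) (h : n ≤ u.length) :
    (u ++ l).take n = u.take n := by
  induction u generalizing n with
  | nil =>
    simp only [List.length_nil, Nat.le_zero] at h
    subst h; simp
  | cons a u ih =>
    cases n with
    | zero => simp
    | succ n => simp [List.take, ih n (by simpa using h)]

lemma nth_swap_ne (u v : List Cell) (p q : Cell) (i : ℕ)
    (h1 : i ≠ u.length) (h2 : i ≠ u.length + 1) :
    nth (u ++ p :: q :: v) i = nth (u ++ q :: p :: v) i := by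
  rcases lt_or_ge i u.length with h | h
  · rw [nth_append_left _ _ _ h, nth_append_left _ _ _ h]
  · obtain ⟨r, rfl⟩ : ∃ r, i = u.length + (r + 2) := ⟨i - u.length - 2, by omega⟩
    rw [nth_append_right, nth_append_right]
    rfl

lemma nth_at_j (u v : List Cell) (p : Cell) (l : List Cell) :
    nth (u ++ p :: l) u.length = some p := by
  have := nth_append_right u (p :: l) 0
  simpa [nth] using this

lemma nth_at_j1 (u v : List Cell) (p q : Cell) :
    nth (u ++ p :: q :: v) (u.length + 1) = some q := by
  have := nth_append_right u (p :: q :: v) 1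
  simpa [nth] using this

def bval (p : Cell) : ℤ := if p = B then 1 else 0

lemma cnt_take_mid (N : ℕ) (u v : List Cell) (p q : Cell) (h : u.length + 1 = N) :
    (cnt B ((u ++ p :: q :: v).take N) : ℤ) = cnt B u + bval p := by
  have : (u ++ p :: q :: v).take N = u ++ [p] := by
    rw [← h, take_app_add u (p :: q :: v) 1]
    rfl
  rw [this, cnt_append]
  cases p <;> simp [cnt, bval]

lemma beta_eq_low (N : ℕ) (u v : List Cell) (p q : Cell) (h : u.length + 2 ≤ N) :
    cnt B ((u ++ p :: q :: v).take N) = cnt B ((u ++ q :: p :: v).take N) := by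
  obtain ⟨r, rfl⟩ : ∃ r, N = u.length + (r + 2) := ⟨N - u.length - 2, by omega⟩
  rw [take_app_add, take_app_add]
  show cnt B (u ++ p :: q :: v.take r) = cnt B (u ++ q :: p :: v.take r)
  exact cnt_swap B u (v.take r) p q

lemma beta_eq_high (N : ℕ) (u v : List Cell) (p q : Cell) (h : N ≤ u.length) :
    cnt B ((u ++ p :: q :: v).take N) = cnt B ((u ++ q :: p :: v).take N) := by
  rw [take_app_le _ _ _ h, take_app_le _ _ _ h]

lemma eps_parity (N : ℕ) (w w' : List Cell) (k : ℕ) (h : (k + N) % 2 = (k' + N) % 2)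
    (h1 : nth w (N-1) = nth w' (N-1)) (h2 : nth w N = nth w' N) :
    eps N w k = eps N w' k' := by
  rw [eps, eps, h, h1, h2]

lemma jump_phi (N : ℕ) (hN : 1 ≤ N) (u v : List Cell) (p q : Cell)
    (hp : p ≠ O) (hq : q ≠ O) :
    |phiW N (u ++ p :: q :: v) (u.length + 2) - phiW N (u ++ q :: p :: v) u.length| ≤ 1 := by
  set j := u.length with hj
  have hpar : (j + 2 + N) % 2 = (j + N) % 2 := by omega
  rcases Nat.mod_two_eq_zero_or_one (j + N) with he | ho
  · -- even case: eps = 0 on both sides, β unchanged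
    have e1 : eps N (u ++ p :: q :: v) (j + 2) = 0 := eps_even _ _ _ (by omega)
    have e2 : eps N (u ++ q :: p :: v) j = 0 := eps_even _ _ _ he
    have hb : cnt B ((u ++ p :: q :: v).take N) = cnt B ((u ++ q :: p :: v).take N) := by
      rcases (by omega : j + 2 ≤ N ∨ N ≤ j) with h | h
      · exact beta_eq_low N u v p q h
      · exact beta_eq_high N u v p q h
    have : phiW N (u ++ p :: q :: v) (j + 2) - phiW N (u ++ q :: p :: v) j = sv p q := by
      rw [phiW, phiW, e1, e2, hb, inv_swap]
      ring
    rw [this]; exact sv_bound p q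
  · rcases eq_or_ne (j + 1) N with hmid | hne
    · -- middle case
      have hinv := inv_swap u v p q
      have hb1 := cnt_take_mid N u v p q hmid
      have hb2 := cnt_take_mid N u v q p hmid
      have hn1 : nth (u ++ p :: q :: v) (N - 1) = some p := by
        rw [show N - 1 = j by omega]; exact nth_at_j u v p _
      have hn2 : nth (u ++ p :: q :: v) N = some q := by
        rw [show N = j + 1 by omega]; exact nth_at_j1 u v p q
      have hn1' : nth (u ++ q :: p :: v) (N - 1) = some q := by
        rw [show N - 1 = j by omega]; exact nth_at_j u v q _
      have hn2' : nth (u ++ q :: p :: v) N = some p := by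
        rw [show N = j + 1 by omega]; exact nth_at_j1 u v q p
      have e1 : eps N (u ++ p :: q :: v) (j + 2) = pairval (some p) (some q) := by
        rw [eps, if_pos (by omega), hn1, hn2]
      have e2 : eps N (u ++ q :: p :: v) j = pairval (some q) (some p) := by
        rw [eps, if_pos (by omega), hn1', hn2']
      have : phiW N (u ++ p :: q :: v) (j + 2) - phiW N (u ++ q :: p :: v) j =
          sv p q + 2 * (bval p - bval q) + (pairval (some p) (some q) -
            pairval (some q) (some p)) := by
        rw [phiW, phiW, e1, e2, hb1, hb2, hinv]
        ring
      rw [this]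
      rcases p with _ | _ | _ <;> rcases q with _ | _ | _ <;>
        simp_all [sv, bval, pairval]
    · -- odd, non-middle: pair and β unchanged
      have hb : cnt B ((u ++ p :: q :: v).take N) = cnt B ((u ++ q :: p :: v).take N) := by
        rcases (by omega : j + 2 ≤ N ∨ N ≤ j) with h | h
        · exact beta_eq_low N u v p q h
        · exact beta_eq_high N u v p q h
      have hn1 : nth (u ++ p :: q :: v) (N - 1) = nth (u ++ q :: p :: v) (N - 1) :=
        nth_swap_ne u v p q (N - 1) (by omega) (by omega)
      have hn2 : nth (u ++ p :: q :: v) N = nth (u ++ q :: p :: v) N :=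
        nth_swap_ne u v p q N (by omega) (by omega)
      have he : eps N (u ++ p :: q :: v) (j + 2) = eps N (u ++ q :: p :: v) j :=
        eps_parity N _ _ _ hpar hn1 hn2
      have : phiW N (u ++ p :: q :: v) (j + 2) - phiW N (u ++ q :: p :: v) j = sv p q := by
        rw [phiW, phiW, he, hb, inv_swap]
        ring
      rw [this]; exact sv_bound p q

def Phi (N : ℕ) (c : List Cell) : ℤ := phiW N (remO c) (kpos c)

lemma pegmove_cnt (a : Cell) {c d : List Cell} (h : PegMove c d) : cnt a c = cnt a d := by
  rcases h with ⟨x, y, p, hp, hcd | hcd⟩ | ⟨x, y, p, q, hp, hq, hcd | hcd⟩ <;>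
    rcases hcd with ⟨rfl, rfl⟩ <;> simp [cnt_append, cnt] <;> ring

lemma pegmove_phi (N : ℕ) (hN : 1 ≤ N) {c d : List Cell} (hc : cnt O c = 1)
    (h : PegMove c d) : |Phi N c - Phi N d| ≤ 1 := by
  have keystep : ∀ x y : List Cell, ∀ p : Cell, p ≠ O →
      cnt O (x ++ p :: O :: y) = 1 →
      |Phi N (x ++ p :: O :: y) - Phi N (x ++ O :: p :: y)| ≤ 1 := by
    intro x y p hp hcnt
    have hx : cnt O x = 0 ∧ cnt O y = 0 := by
      simp [cnt_append, cnt, hp] at hcnt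
      omega
    have r1 : remO (x ++ p :: O :: y) = x ++ p :: y := by
      rw [remO_append _ _ hx.1]
      simp [remO, hp, remO_of_cnt hx.2]
    have r2 : remO (x ++ O :: p :: y) = x ++ p :: y := by
      rw [remO_append _ _ hx.1]
      simp [remO, hp, remO_of_cnt hx.2]
    have k1 : kpos (x ++ p :: O :: y) = x.length + 1 := by
      rw [kpos_append _ _ hx.1]
      simp [kpos, hp]
    have k2 : kpos (x ++ O :: p :: y) = x.length := by
      rw [kpos_append _ _ hx.1]
      simp [kpos]
    rw [Phi, Phi, r1, r2, k1, k2]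
    exact step_phi N (x ++ p :: y) x.length
  have keyjump : ∀ x y : List Cell, ∀ p q : Cell, p ≠ O → q ≠ O →
      cnt O (x ++ p :: q :: O :: y) = 1 →
      |Phi N (x ++ p :: q :: O :: y) - Phi N (x ++ O :: q :: p :: y)| ≤ 1 := by
    intro x y p q hp hq hcnt
    have hx : cnt O x = 0 ∧ cnt O y = 0 := by
      simp [cnt_append, cnt, hp, hq] at hcnt
      omega
    have r1 : remO (x ++ p :: q :: O :: y) = x ++ p :: q :: y := by
      rw [remO_append _ _ hx.1]
      simp [remO, hp, hq, remO_of_cnt hx.2]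
    have r2 : remO (x ++ O :: q :: p :: y) = x ++ q :: p :: y := by
      rw [remO_append _ _ hx.1]
      simp [remO, hp, hq, remO_of_cnt hx.2]
    have k1 : kpos (x ++ p :: q :: O :: y) = x.length + 2 := by
      rw [kpos_append _ _ hx.1]
      simp [kpos, hp, hq]
    have k2 : kpos (x ++ O :: q :: p :: y) = x.length := by
      rw [kpos_append _ _ hx.1]
      simp [kpos]
    rw [Phi, Phi, r1, r2, k1, k2]
    exact jump_phi N hN x y p q hp hq
  rcases h with ⟨x, y, p, hp, hcd | hcd⟩ | ⟨x, y, p, q, hp, hq, hcd | hcd⟩ <;>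
    rcases hcd with ⟨rfl, rfl⟩
  · exact keystep x y p hp hc
  · rw [abs_sub_comm]
    refine keystep x y p hp ?_
    rw [pegmove_cnt O (Or.inl ⟨x, y, p, hp, Or.inl ⟨rfl, rfl⟩⟩ :
      PegMove (x ++ p :: O :: y) (x ++ O :: p :: y))]
    exact hc
  · exact keyjump x y p q hp hq hc
  · rw [abs_sub_comm]
    refine keyjump x y p q hp hq ?_
    rw [pegmove_cnt O (Or.inr ⟨x, y, p, q, hp, hq, Or.inl ⟨rfl, rfl⟩⟩ :
      PegMove (x ++ p :: q :: O :: y) (x ++ O :: q :: p :: y))]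
    exact hc

lemma cnt_repl (a b : Cell) (n : ℕ) : cnt a (List.replicate n b) = if b = a then n else 0 := by
  induction n with
  | zero => simp [cnt]
  | succ n ih => simp [List.replicate_succ, cnt, ih]; split <;> omega

lemma inv_rep_B (n : ℕ) (l : List Cell) :
    inv (List.replicate n B ++ l) = n * cnt R l + inv l := by
  induction n with
  | zero => simp
  | succ n ih =>
    simp only [List.replicate_succ, List.cons_append, inv, ih, List.append_eq]
    rw [cnt_append, cnt_repl]
    simp
    ring

lemma inv_rep_R (n : ℕ) (l : List Cell) : inv (List.replicate n R ++ l) = inv l := by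
  induction n with
  | zero => simp
  | succ n ih => simp only [List.replicate_succ, List.cons_append, inv, ih, List.append_eq]; simp

lemma inv_fin (n : ℕ) : inv (List.replicate n B) = 0 := by
  have := inv_rep_B n []
  simpa [inv, cnt] using this

lemma Phi_start (N : ℕ) : Phi N (startCfg N) = N * N + 2 * N := by
  have h0 : cnt O (List.replicate N B) = 0 := by simp [cnt_repl]
  have r : remO (startCfg N) = List.replicate N B ++ List.replicate N R := by
    rw [startCfg, remO_append _ _ h0]
    simp [remO, remO_of_cnt (by simp [cnt_repl] : cnt O (List.replicate N R) = 0)]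
  have k : kpos (startCfg N) = N := by
    rw [startCfg, kpos_append _ _ h0]
    simp [kpos]
  rw [Phi, r, k, phiW]
  have h1 : inv (List.replicate N B ++ List.replicate N R) = N * N := by
    rw [inv_rep_B, cnt_repl]
    have : inv (List.replicate N R) = 0 := by simpa [inv] using inv_rep_R N []
    simp [this]
  have h2 : (List.replicate N B ++ List.replicate N R).take N = List.replicate N B := by
    have := take_app_add (List.replicate N B) (List.replicate N R) 0
    simpa using this
  have h3 : eps N (List.replicate N B ++ List.replicate N R) N = 0 :=
    eps_even _ _ _ (by omega)
  rw [h1, h2, h3, cnt_repl]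
  simp

lemma Phi_finish (N : ℕ) : Phi N (finishCfg N) = 0 := by
  have h0 : cnt O (List.replicate N R) = 0 := by simp [cnt_repl]
  have r : remO (finishCfg N) = List.replicate N R ++ List.replicate N B := by
    rw [finishCfg, remO_append _ _ h0]
    simp [remO, remO_of_cnt (by simp [cnt_repl] : cnt O (List.replicate N B) = 0)]
  have k : kpos (finishCfg N) = N := by
    rw [finishCfg, kpos_append _ _ h0]
    simp [kpos]
  rw [Phi, r, k, phiW]
  have h1 : inv (List.replicate N R ++ List.replicate N B) = 0 := by
    rw [inv_rep_R, inv_fin]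
  have h2 : (List.replicate N R ++ List.replicate N B).take N = List.replicate N R := by
    have := take_app_add (List.replicate N R) (List.replicate N B) 0
    simpa using this
  have h3 : eps N (List.replicate N R ++ List.replicate N B) N = 0 :=
    eps_even _ _ _ (by omega)
  rw [h1, h2, h3, cnt_repl]
  simp

theorem lower_bound (N : ℕ) (hN : 1 ≤ N) (L : ℕ) (f : ℕ → List Cell)
    (hs : IsSolution N L f) : N ^ 2 + 2 * N ≤ L := by
  obtain ⟨h0, hL, hm⟩ := hs
  have key : ∀ t, t ≤ L → cnt O (f t) = 1 ∧ Phi N (startCfg N) ≤ Phi N (f t) + t := by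
    intro t
    induction t with
    | zero =>
      intro _
      constructor
      · rw [h0, startCfg]
        simp [cnt_append, cnt, cnt_repl]
      · rw [h0]; simp
    | succ t ih =>
      intro ht
      obtain ⟨hcnt, hph⟩ := ih (by omega)
      have hmove := hm t (by omega)
      have hcnt' : cnt O (f (t+1)) = 1 := by rw [← pegmove_cnt O hmove]; exact hcnt
      have habs := pegmove_phi N hN hcnt hmove
      rw [abs_le] at habs
      refine ⟨hcnt', ?_⟩
      push_cast
      push_cast at hph
      linarith [habs.2]
  obtain ⟨_, hfin⟩ := key L le_rfl
  rw [hL, Phi_finish, Phi_start] at hfin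
  have : (N : ℤ) * N + 2 * N ≤ (L : ℤ) := by linarith
  have hnat : N * N + 2 * N ≤ L := by exact_mod_cast this
  calc N ^ 2 + 2 * N = N * N + 2 * N := by ring
  _ ≤ L := hnat

/-- There exists a solution of the `N`-peg puzzle using exactly `N² + 2N`
moves, and no solution uses fewer; hence the minimum number of moves needed
is exactly `N² + 2N`. -/
theorem min_moves (N : ℕ) (hN : 1 ≤ N) :
    (∃ f : ℕ → List Cell, IsSolution N (N ^ 2 + 2 * N) f) ∧
    (∀ (L : ℕ) (f : ℕ → List Cell), IsSolution N L f → N ^ 2 + 2 * N ≤ L) :=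
  ⟨exists_solution N, fun L f h => lower_bound N hN L f h⟩
end

section
/- For N = 2n−1, the move sequence (∏_{k=1}^{n-1} S j^{2k-1} s J^{2k}) S j^{2n-1} S (∏_{k=1}^{n-1} J^{2n-2k} s j^{2n-2k-1} S) is a valid solution of the peg puzzle consisting of exactly N² + 2N moves. -/
open Cell

/-- The four kinds of moves appearing in the explicit solution:
`S` = blue peg steps right, `s` = red peg steps left,
`J` = blue peg jumps right, `j` = red peg jumps left. -/
inductive Letter
  | S : Letter
  | s : Letter
  | J : Letter
  | j : Letter
  deriving DecidableEq

/-- `MoveRel l c d` : performing move `l` transforms configuration `c` into `d`.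
Jumps are over a single adjacent peg into the empty hole. -/
def MoveRel : Letter → List Cell → List Cell → Prop
  | .S, c, d => ∃ x y, c = x ++ B :: O :: y ∧ d = x ++ O :: B :: y
  | .s, c, d => ∃ x y, c = x ++ O :: R :: y ∧ d = x ++ R :: O :: y
  | .J, c, d => ∃ x y p, p ≠ O ∧ c = x ++ B :: p :: O :: y ∧ d = x ++ O :: p :: B :: y
  | .j, c, d => ∃ x y p, p ≠ O ∧ c = x ++ O :: p :: R :: y ∧ d = x ++ R :: p :: O :: y

/-- `Plays w c d` : the sequence of moves `w`, each legal from the current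
configuration, transforms `c` into `d`. -/
def Plays : List Letter → List Cell → List Cell → Prop
  | [], c, d => c = d
  | l :: ls, c, d => ∃ e, MoveRel l c e ∧ Plays ls e d

/-- The explicit solution sequence for `N = 2n - 1`:
`(∏_{k=1}^{n-1} S j^{2k-1} s J^{2k}) S j^{2n-1} S
 (∏_{k=1}^{n-1} J^{2n-2k} s j^{2n-2k-1} S)`. -/
def seqOdd (n : ℕ) : List Letter :=
  (((List.range (n - 1)).map (fun k =>
      Letter.S :: (List.replicate (2 * (k + 1) - 1) Letter.j ++
        Letter.s :: List.replicate (2 * (k + 1)) Letter.J))).flatten) ++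
  (Letter.S :: (List.replicate (2 * n - 1) Letter.j ++ [Letter.S])) ++
  (((List.range (n - 1)).map (fun k =>
      List.replicate (2 * n - 2 * (k + 1)) Letter.J ++
        Letter.s :: (List.replicate (2 * n - 2 * (k + 1) - 1) Letter.j ++
          [Letter.S]))).flatten)

namespace PegAux
open Cell List

/-- `(BR)^t` as a list. -/
def br : ℕ → List Cell
  | 0 => []
  | t+1 => B :: R :: br t

/-- `(RB)^t` as a list. -/
def rb : ℕ → List Cell
  | 0 => []
  | t+1 => R :: B :: rb t

lemma br_succ (t : ℕ) : br (t+1) = br t ++ [B, R] := by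
  induction t with
  | zero => rfl
  | succ t ih =>
      calc br (t+2) = B :: R :: br (t+1) := rfl
        _ = B :: R :: (br t ++ [B, R]) := by rw [ih]
        _ = (B :: R :: br t) ++ [B, R] := by simp
        _ = br (t+1) ++ [B, R] := rfl

lemma rb_succ (t : ℕ) : rb (t+1) = rb t ++ [R, B] := by
  induction t with
  | zero => rfl
  | succ t ih =>
      calc rb (t+2) = R :: B :: rb (t+1) := rfl
        _ = R :: B :: (rb t ++ [R, B]) := by rw [ih]
        _ = (R :: B :: rb t) ++ [R, B] := by simp
        _ = rb (t+1) ++ [R, B] := rfl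

lemma cons_rb (t : ℕ) : B :: rb t = br t ++ [B] := by
  induction t with
  | zero => rfl
  | succ t ih =>
      calc B :: rb (t+1) = B :: R :: (B :: rb t) := rfl
        _ = B :: R :: (br t ++ [B]) := by rw [ih]
        _ = (B :: R :: br t) ++ [B] := by simp
        _ = br (t+1) ++ [B] := rfl

lemma cons_br (t : ℕ) : R :: br t = rb t ++ [R] := by
  induction t with
  | zero => rfl
  | succ t ih =>
      calc R :: br (t+1) = R :: B :: (R :: br t) := rfl
        _ = R :: B :: (rb t ++ [R]) := by rw [ih]
        _ = (R :: B :: rb t) ++ [R] := by simp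
        _ = rb (t+1) ++ [R] := rfl

lemma plays_append : ∀ {u v : List Letter} {c d e : List Cell},
    Plays u c d → Plays v d e → Plays (u ++ v) c e := by
  intro u
  induction u with
  | nil => intro v c d e h1 h2; cases h1; exact h2
  | cons l ls ih =>
      intro v c d e h1 h2
      obtain ⟨f, hm, hp⟩ := h1
      exact ⟨f, hm, ih hp h2⟩

lemma plays_congr {w : List Letter} {c c' d d' : List Cell}
    (hc : c = c') (hd : d = d') (h : Plays w c d) : Plays w c' d' := hc ▸ hd ▸ h

lemma play_S (a c : List Cell) : Plays [.S] (a ++ B :: O :: c) (a ++ O :: B :: c) :=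
  ⟨_, ⟨a, c, rfl, rfl⟩, rfl⟩

lemma play_s (a c : List Cell) : Plays [.s] (a ++ O :: R :: c) (a ++ R :: O :: c) :=
  ⟨_, ⟨a, c, rfl, rfl⟩, rfl⟩

lemma j_run : ∀ (t : ℕ) (a c : List Cell),
    Plays (List.replicate t .j) (a ++ O :: (br t ++ c)) (a ++ (rb t ++ O :: c)) := by
  intro t
  induction t with
  | zero => intro a c; simp [Plays, br, rb]
  | succ t ih =>
      intro a c
      rw [List.replicate_succ]
      refine ⟨a ++ R :: B :: O :: (br t ++ c), ⟨a, br t ++ c, B, by simp, ?_, ?_⟩, ?_⟩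
      · show a ++ O :: (br (t+1) ++ c) = a ++ O :: B :: R :: (br t ++ c)
        rw [show br (t+1) = B :: R :: br t from rfl]; simp
      · simp
      · have h := ih (a ++ [R, B]) c
        rw [show rb (t+1) = R :: B :: rb t from rfl]
        simpa using h

lemma J_run : ∀ (t : ℕ) (a c : List Cell),
    Plays (List.replicate t .J) (a ++ (br t ++ O :: c)) (a ++ O :: (rb t ++ c)) := by
  intro t
  induction t with
  | zero => intro a c; simp [Plays, br, rb]
  | succ t ih =>
      intro a c
      rw [List.replicate_succ]
      refine ⟨a ++ (br t ++ O :: (R :: B :: c)), ⟨a ++ br t, c, R, by simp, ?_, ?_⟩, ?_⟩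
      · rw [br_succ]; simp
      · simp
      · have h := ih a (R :: B :: c)
        rw [rb_succ]
        refine plays_congr rfl ?_ h
        simp

lemma block1 (m k : ℕ) :
    Plays (.S :: (List.replicate (2*k+1) .j ++ .s :: List.replicate (2*k+2) .J))
      (List.replicate (m+3) B ++ O :: (rb (2*k) ++ List.replicate (m+3) R))
      (List.replicate (m+1) B ++ O :: (rb (2*k+2) ++ List.replicate (m+1) R)) := by
  have h0 : Plays [Letter.S]
      (List.replicate (m+3) B ++ O :: (rb (2*k) ++ List.replicate (m+3) R))
      (List.replicate (m+2) B ++ O :: (br (2*k+1) ++ List.replicate (m+2) R)) := by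
    refine plays_congr ?_ ?_
      (play_S (List.replicate (m+2) B) (rb (2*k) ++ List.replicate (m+3) R))
    · calc List.replicate (m+2) B ++ B :: O :: (rb (2*k) ++ List.replicate (m+3) R)
          = (List.replicate (m+2) B ++ [B]) ++ O :: (rb (2*k) ++ List.replicate (m+3) R) := by
            simp
        _ = List.replicate (m+3) B ++ O :: (rb (2*k) ++ List.replicate (m+3) R) := by
            rw [← List.replicate_succ']
    · calc List.replicate (m+2) B ++ O :: B :: (rb (2*k) ++ List.replicate (m+3) R)
          = List.replicate (m+2) B ++
              O :: ((B :: rb (2*k)) ++ R :: List.replicate (m+2) R) := by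
            rw [show List.replicate (m+3) R = R :: List.replicate (m+2) R from rfl]; simp
        _ = List.replicate (m+2) B ++
              O :: ((br (2*k) ++ [B, R]) ++ List.replicate (m+2) R) := by
            rw [cons_rb]; simp
        _ = List.replicate (m+2) B ++ O :: (br (2*k+1) ++ List.replicate (m+2) R) := by
            rw [br_succ]
  have h1 : Plays (List.replicate (2*k+1) Letter.j)
      (List.replicate (m+2) B ++ O :: (br (2*k+1) ++ List.replicate (m+2) R))
      (List.replicate (m+2) B ++ (rb (2*k+1) ++ O :: List.replicate (m+2) R)) :=
    j_run (2*k+1) _ _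
  have h2 : Plays [Letter.s]
      (List.replicate (m+2) B ++ (rb (2*k+1) ++ O :: List.replicate (m+2) R))
      (List.replicate (m+1) B ++ (br (2*k+2) ++ O :: List.replicate (m+1) R)) := by
    refine plays_congr ?_ ?_
      (play_s (List.replicate (m+2) B ++ rb (2*k+1)) (List.replicate (m+1) R))
    · rw [show List.replicate (m+2) R = R :: List.replicate (m+1) R from rfl]; simp
    · calc (List.replicate (m+2) B ++ rb (2*k+1)) ++ R :: O :: List.replicate (m+1) R
          = List.replicate (m+2) B ++
              ((rb (2*k+1) ++ [R]) ++ O :: List.replicate (m+1) R) := by simp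
        _ = (List.replicate (m+1) B ++ [B]) ++
              ((R :: br (2*k+1)) ++ O :: List.replicate (m+1) R) := by
            rw [← cons_br, ← List.replicate_succ']
        _ = List.replicate (m+1) B ++
              ((B :: R :: br (2*k+1)) ++ O :: List.replicate (m+1) R) := by simp
        _ = List.replicate (m+1) B ++ (br (2*k+2) ++ O :: List.replicate (m+1) R) := rfl
  have h3 : Plays (List.replicate (2*k+2) Letter.J)
      (List.replicate (m+1) B ++ (br (2*k+2) ++ O :: List.replicate (m+1) R))
      (List.replicate (m+1) B ++ O :: (rb (2*k+2) ++ List.replicate (m+1) R)) :=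
    J_run (2*k+2) _ _
  have := plays_append h0 (plays_append h1 (plays_append h2 h3))
  simpa using this

lemma blockMid (t : ℕ) :
    Plays (.S :: (List.replicate (2*t+1) .j ++ [.S]))
      (B :: O :: (rb (2*t) ++ [R]))
      (R :: (br (2*t) ++ O :: [B])) := by
  have h0 : Plays [Letter.S]
      (B :: O :: (rb (2*t) ++ [R]))
      ([] ++ O :: (br (2*t+1) ++ [])) := by
    refine plays_congr ?_ ?_ (play_S ([] : List Cell) (rb (2*t) ++ [R]))
    · simp
    · calc ([] : List Cell) ++ O :: B :: (rb (2*t) ++ [R])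
          = O :: ((B :: rb (2*t)) ++ [R]) := by simp
        _ = O :: ((br (2*t) ++ [B, R]) ++ []) := by rw [cons_rb]; simp
        _ = [] ++ O :: (br (2*t+1) ++ []) := by rw [br_succ]; simp
  have h1 : Plays (List.replicate (2*t+1) Letter.j)
      ([] ++ O :: (br (2*t+1) ++ []))
      ([] ++ (rb (2*t+1) ++ O :: [])) := j_run _ _ _
  have h2 : Plays [Letter.S]
      ([] ++ (rb (2*t+1) ++ O :: []))
      (R :: (br (2*t) ++ O :: [B])) := by
    refine plays_congr ?_ ?_ (play_S (rb (2*t) ++ [R]) ([] : List Cell))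
    · calc (rb (2*t) ++ [R]) ++ B :: O :: ([] : List Cell)
          = (rb (2*t) ++ [R, B]) ++ O :: [] := by simp
        _ = rb (2*t+1) ++ O :: [] := by rw [rb_succ]
        _ = [] ++ (rb (2*t+1) ++ O :: []) := by simp
    · calc (rb (2*t) ++ [R]) ++ O :: B :: ([] : List Cell)
          = (R :: br (2*t)) ++ O :: [B] := by rw [cons_br]
        _ = R :: (br (2*t) ++ O :: [B]) := by simp
  have := plays_append h0 (plays_append h1 h2)
  simpa using this

lemma block3 (m q : ℕ) :
    Plays (List.replicate (m+2) .J ++ .s :: (List.replicate (m+1) .j ++ [.S]))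
      (List.replicate (2*q+1) R ++ (br (m+2) ++ O :: List.replicate (2*q+1) B))
      (List.replicate (2*q+3) R ++ (br m ++ O :: List.replicate (2*q+3) B)) := by
  have h0 : Plays (List.replicate (m+2) Letter.J)
      (List.replicate (2*q+1) R ++ (br (m+2) ++ O :: List.replicate (2*q+1) B))
      (List.replicate (2*q+1) R ++ O :: (rb (m+2) ++ List.replicate (2*q+1) B)) :=
    J_run _ _ _
  have h1 : Plays [Letter.s]
      (List.replicate (2*q+1) R ++ O :: (rb (m+2) ++ List.replicate (2*q+1) B))
      (List.replicate (2*q+2) R ++ O :: (br (m+1) ++ List.replicate (2*q+2) B)) := by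
    refine plays_congr ?_ ?_
      (play_s (List.replicate (2*q+1) R) (B :: (rb (m+1) ++ List.replicate (2*q+1) B)))
    · rw [show rb (m+2) = R :: B :: rb (m+1) from rfl]; simp
    · calc List.replicate (2*q+1) R ++ R :: O :: (B :: (rb (m+1) ++ List.replicate (2*q+1) B))
          = (List.replicate (2*q+1) R ++ [R]) ++
              O :: ((B :: rb (m+1)) ++ List.replicate (2*q+1) B) := by simp
        _ = List.replicate (2*q+2) R ++
              O :: ((br (m+1) ++ [B]) ++ List.replicate (2*q+1) B) := by
            rw [← List.replicate_succ', cons_rb]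
        _ = List.replicate (2*q+2) R ++
              O :: (br (m+1) ++ (B :: List.replicate (2*q+1) B)) := by simp
        _ = List.replicate (2*q+2) R ++ O :: (br (m+1) ++ List.replicate (2*q+2) B) := rfl
  have h2 : Plays (List.replicate (m+1) Letter.j)
      (List.replicate (2*q+2) R ++ O :: (br (m+1) ++ List.replicate (2*q+2) B))
      (List.replicate (2*q+2) R ++ (rb (m+1) ++ O :: List.replicate (2*q+2) B)) :=
    j_run _ _ _
  have h3 : Plays [Letter.S]
      (List.replicate (2*q+2) R ++ (rb (m+1) ++ O :: List.replicate (2*q+2) B))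
      (List.replicate (2*q+3) R ++ (br m ++ O :: List.replicate (2*q+3) B)) := by
    refine plays_congr ?_ ?_
      (play_S (List.replicate (2*q+2) R ++ (rb m ++ [R])) (List.replicate (2*q+2) B))
    · calc (List.replicate (2*q+2) R ++ (rb m ++ [R])) ++ B :: O :: List.replicate (2*q+2) B
          = List.replicate (2*q+2) R ++
              ((rb m ++ [R, B]) ++ O :: List.replicate (2*q+2) B) := by simp
        _ = List.replicate (2*q+2) R ++ (rb (m+1) ++ O :: List.replicate (2*q+2) B) := by
            rw [rb_succ]
    · calc (List.replicate (2*q+2) R ++ (rb m ++ [R])) ++ O :: B :: List.replicate (2*q+2) B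
          = List.replicate (2*q+2) R ++
              ((rb m ++ [R]) ++ O :: List.replicate (2*q+3) B) := by
            simp [show B :: List.replicate (2*q+2) B = List.replicate (2*q+3) B from rfl]
        _ = List.replicate (2*q+2) R ++
              ((R :: br m) ++ O :: List.replicate (2*q+3) B) := by rw [← cons_br]
        _ = (List.replicate (2*q+2) R ++ [R]) ++
              (br m ++ O :: List.replicate (2*q+3) B) := by simp
        _ = List.replicate (2*q+3) R ++ (br m ++ O :: List.replicate (2*q+3) B) := by
            rw [← List.replicate_succ']
  have := plays_append h0 (plays_append h1 (plays_append h2 h3))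
  simpa using this

lemma flatten_plays (f : ℕ → List Letter) (g : ℕ → List Cell) :
    ∀ t, (∀ k, k < t → Plays (f k) (g k) (g (k+1))) →
    Plays (((List.range t).map f).flatten) (g 0) (g t) := by
  intro t
  induction t with
  | zero => intro _; simp [Plays]
  | succ t ih =>
      intro h
      rw [List.range_succ, List.map_append, List.flatten_append]
      exact plays_append (ih fun k hk => h k (by omega))
        (by simpa using h t (by omega))

end PegAux

namespace PegAux
open Cell

lemma lenA : ∀ t : ℕ,
    ((((List.range t).map (fun k =>
      Letter.S :: (List.replicate (2 * (k + 1) - 1) Letter.j ++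
        Letter.s :: List.replicate (2 * (k + 1)) Letter.J))).flatten).length)
      = 2*t*t + 3*t := by
  intro t
  induction t with
  | zero => simp
  | succ t ih =>
      rw [List.range_succ, List.map_append, List.flatten_append, List.length_append, ih]
      have e : 2*(t+1)-1 = 2*t+1 := by omega
      simp only [List.map_cons, List.map_nil, List.flatten, List.append_eq, List.append_nil,
        List.length_cons, List.length_append, List.length_replicate, e]
      ring

lemma lenB (n : ℕ) : ∀ t : ℕ, t ≤ n - 1 → 1 ≤ n →
    ((((List.range t).map (fun k =>
      List.replicate (2 * n - 2 * (k + 1)) Letter.J ++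
        Letter.s :: (List.replicate (2 * n - 2 * (k + 1) - 1) Letter.j ++
          [Letter.S]))).flatten).length) + 2*t*t = t*(4*n-1) := by
  intro t
  induction t with
  | zero => simp
  | succ t ih =>
      intro ht hn
      have ih' := ih (by omega) hn
      rw [List.range_succ, List.map_append, List.flatten_append, List.length_append]
      have e1 : 2*n-2*(t+1) = 2*(n-t-2)+2 := by omega
      have e2 : 2*(n-t-2)+2-1 = 2*(n-t-2)+1 := by omega
      have e3 : 4*n-1 = 4*(n-t-2)+4*t+7 := by omega
      rw [e3] at ih' ⊢
      simp only [List.map_cons, List.map_nil, List.flatten, List.append_eq, List.append_nil,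
        List.length_cons, List.length_append, List.length_replicate,
        List.length_singleton, List.length_nil, e1, e2]
      zify at ih' ⊢
      linear_combination ih'

end PegAux

/-- For `N = 2n - 1`, the sequence
`(∏_{k=1}^{n-1} S j^{2k-1} s J^{2k}) S j^{2n-1} S
 (∏_{k=1}^{n-1} J^{2n-2k} s j^{2n-2k-1} S)`
is a valid solution of the peg puzzle (every move is legal and it transforms
`BᴺORᴺ` into `RᴺOBᴺ`) consisting of exactly `N² + 2N` moves. -/
theorem odd_solution (n : ℕ) (hn : 1 ≤ n) :
    (seqOdd n).length = (2 * n - 1) ^ 2 + 2 * (2 * n - 1) ∧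
    Plays (seqOdd n) (startCfg (2 * n - 1)) (finishCfg (2 * n - 1)) := by
  open PegAux in
  constructor
  · -- length
    have hA := PegAux.lenA (n-1)
    have hB := PegAux.lenB n (n-1) le_rfl hn
    rw [seqOdd, List.length_append, List.length_append, hA]
    simp only [List.length_cons, List.length_append, List.length_replicate,
      List.length_singleton, List.length_nil]
    have e1 : 2*n-1 = 2*(n-1)+1 := by omega
    have e2 : 4*n-1 = 4*(n-1)+3 := by omega
    rw [e2] at hB
    rw [e1]
    zify at hB ⊢
    linear_combination hB
  · -- plays
    have h1 : ∀ k, k < n-1 →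
        Plays ((fun k => Letter.S :: (List.replicate (2 * (k + 1) - 1) Letter.j ++
            Letter.s :: List.replicate (2 * (k + 1)) Letter.J)) k)
          ((fun k => List.replicate (2*(n-1-k)+1) B ++
            O :: (PegAux.rb (2*k) ++ List.replicate (2*(n-1-k)+1) R)) k)
          ((fun k => List.replicate (2*(n-1-k)+1) B ++
            O :: (PegAux.rb (2*k) ++ List.replicate (2*(n-1-k)+1) R)) (k+1)) := by
      intro k hk
      have e1 : 2*(n-1-k)+1 = (2*(n-2-k))+3 := by omega
      have e2 : 2*(n-1-(k+1))+1 = (2*(n-2-k))+1 := by omega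
      have e3 : 2*(k+1)-1 = 2*k+1 := by omega
      have e4 : 2*(k+1) = 2*k+2 := by omega
      simp only [e1, e2, e3, e4]
      exact PegAux.block1 (2*(n-2-k)) k
    have hP1 := PegAux.flatten_plays _ _ (n-1) h1
    have h3 : ∀ k, k < n-1 →
        Plays ((fun k => List.replicate (2 * n - 2 * (k + 1)) Letter.J ++
            Letter.s :: (List.replicate (2 * n - 2 * (k + 1) - 1) Letter.j ++
              [Letter.S])) k)
          ((fun k => List.replicate (2*k+1) R ++
            (PegAux.br (2*(n-1-k)) ++ O :: List.replicate (2*k+1) B)) k)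
          ((fun k => List.replicate (2*k+1) R ++
            (PegAux.br (2*(n-1-k)) ++ O :: List.replicate (2*k+1) B)) (k+1)) := by
      intro k hk
      have e1 : 2*n-2*(k+1) = 2*(n-2-k)+2 := by omega
      have e2 : 2*(n-2-k)+2-1 = 2*(n-2-k)+1 := by omega
      have e3 : 2*(n-1-k) = 2*(n-2-k)+2 := by omega
      have e4 : 2*(n-1-(k+1)) = 2*(n-2-k) := by omega
      have e5 : 2*(k+1)+1 = 2*k+3 := by omega
      simp only [e1, e2, e3, e4, e5]
      exact PegAux.block3 (2*(n-2-k)) k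
    have hP3 := PegAux.flatten_plays _ _ (n-1) h3
    have hMid := PegAux.blockMid (n-1)
    have em : 2*(n-1)+1 = 2*n-1 := by omega
    rw [em] at hMid
    -- endpoint equalities
    have es : (List.replicate (2*(n-1-0)+1) B ++
        O :: (PegAux.rb (2*0) ++ List.replicate (2*(n-1-0)+1) R)) = startCfg (2*n-1) := by
      rw [startCfg, show (2*0 : ℕ) = 0 from rfl, show PegAux.rb 0 = [] from rfl,
        Nat.sub_zero, em]
      simp
    have e1' : (List.replicate (2*(n-1-(n-1))+1) B ++
        O :: (PegAux.rb (2*(n-1)) ++ List.replicate (2*(n-1-(n-1))+1) R))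
        = B :: O :: (PegAux.rb (2*(n-1)) ++ [R]) := by
      rw [Nat.sub_self]
      simp
    have e2' : R :: (PegAux.br (2*(n-1)) ++ O :: [B])
        = (List.replicate (2*0+1) R ++
          (PegAux.br (2*(n-1-0)) ++ O :: List.replicate (2*0+1) B)) := by
      rw [Nat.sub_zero]
      simp
    have ef : (List.replicate (2*(n-1)+1) R ++
        (PegAux.br (2*(n-1-(n-1))) ++ O :: List.replicate (2*(n-1)+1) B))
        = finishCfg (2*n-1) := by
      rw [finishCfg, Nat.sub_self, show (2*0 : ℕ) = 0 from rfl,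
        show PegAux.br 0 = [] from rfl, em]
      simp
    rw [seqOdd]
    refine PegAux.plays_congr es ef ?_
    exact PegAux.plays_append
      (PegAux.plays_append hP1 (PegAux.plays_congr e1'.symm e2' hMid)) hP3
end
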